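/- Let X, Y, Z, U, V, W be positive real numbers such that X, Y, Z are the side lengths of a (nondegenerate) triangle and U, V, W are the side lengths of a (nondegenerate) triangle, i.e. |X−Y| < Z < X+Y and |U−V| < W < U+V. Then X+U, Y+V, Z+W are also the side lengths of a triangle, and if α = arccos((X²+Y²−Z²)/(2XY)) is the angle between the sides of lengths X and Y, β = arccos((U²+V²−W²)/(2UV)) is the angle between the sides of lengths U and V, and γ = arccos(((X+U)²+(Y+V)²−(Z+W)²)/(2(X+U)(Y+V))) is the angle between the sides of lengths X+U and Y+V, then α·(X+Y−Z) + β·(U+V−W) ≤ γ·((X+U)+(Y+V)−(Z+W)). -/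

import Mathlib

set_option maxHeartbeats 1000000

open Real

/-- Engel form / Cauchy–Schwarz: `(u+v)²/(s+t) ≤ u²/s + v²/t`. -/
private lemma engel_form (u v s t : ℝ) (hs : 0 < s) (ht : 0 < t) :
    (u + v) ^ 2 / (s + t) ≤ u ^ 2 / s + v ^ 2 / t := by
  rw [div_add_div _ _ hs.ne' ht.ne', div_le_div_iff₀ (by positivity) (by positivity)]
  nlinarith [sq_nonneg (u * t - v * s), mul_pos hs ht]

/-- Cauchy–Schwarz step for harmonic mean superadditivity. -/
private lemma inv_add_le_aux (u v t : ℝ) (hu : 0 < u) (hv : 0 < v) :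
    1 / (u + v) ≤ t ^ 2 / u + (1 - t) ^ 2 / v := by
  rw [div_add_div _ _ hu.ne' hv.ne', div_le_div_iff₀ (by positivity) (by positivity)]
  nlinarith [sq_nonneg (t * v - (1 - t) * u), mul_pos hu hv]

/-- Superadditivity of the 3-variable harmonic-mean-type function `xyz/(xy+yz+zx)`. -/
private lemma harmonic_superadd (x₁ y₁ z₁ x₂ y₂ z₂ : ℝ)
    (hx₁ : 0 < x₁) (hy₁ : 0 < y₁) (hz₁ : 0 < z₁)
    (hx₂ : 0 < x₂) (hy₂ : 0 < y₂) (hz₂ : 0 < z₂) :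
    x₁ * y₁ * z₁ / (x₁ * y₁ + y₁ * z₁ + z₁ * x₁)
      + x₂ * y₂ * z₂ / (x₂ * y₂ + y₂ * z₂ + z₂ * x₂)
      ≤ (x₁ + x₂) * (y₁ + y₂) * (z₁ + z₂) /
        ((x₁ + x₂) * (y₁ + y₂) + (y₁ + y₂) * (z₁ + z₂) + (z₁ + z₂) * (x₁ + x₂)) := by
  set σ₁ : ℝ := 1 / x₁ + 1 / y₁ + 1 / z₁ with hσ₁
  set σ₂ : ℝ := 1 / x₂ + 1 / y₂ + 1 / z₂ with hσ₂
  set σ₃ : ℝ := 1 / (x₁ + x₂) + 1 / (y₁ + y₂) + 1 / (z₁ + z₂) with hσ₃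
  have hσ₁0 : 0 < σ₁ := by positivity
  have hσ₂0 : 0 < σ₂ := by positivity
  have hσ₃0 : 0 < σ₃ := by positivity
  have h₁ : x₁ * y₁ * z₁ / (x₁ * y₁ + y₁ * z₁ + z₁ * x₁) = 1 / σ₁ := by
    rw [hσ₁]; field_simp; ring
  have h₂ : x₂ * y₂ * z₂ / (x₂ * y₂ + y₂ * z₂ + z₂ * x₂) = 1 / σ₂ := by
    rw [hσ₂]; field_simp; ring
  have h₃ : (x₁ + x₂) * (y₁ + y₂) * (z₁ + z₂) /
      ((x₁ + x₂) * (y₁ + y₂) + (y₁ + y₂) * (z₁ + z₂) + (z₁ + z₂) * (x₁ + x₂)) = 1 / σ₃ := by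
    rw [hσ₃]; field_simp; ring
  rw [h₁, h₂, h₃]
  set t : ℝ := (1 / σ₁) / (1 / σ₁ + 1 / σ₂) with htdef
  have hsum : 0 < 1 / σ₁ + 1 / σ₂ := by positivity
  have key : σ₃ ≤ t ^ 2 * σ₁ + (1 - t) ^ 2 * σ₂ := by
    have hx := inv_add_le_aux x₁ x₂ t hx₁ hx₂
    have hy := inv_add_le_aux y₁ y₂ t hy₁ hy₂
    have hz := inv_add_le_aux z₁ z₂ t hz₁ hz₂
    rw [hσ₃, hσ₁, hσ₂]
    calc 1 / (x₁ + x₂) + 1 / (y₁ + y₂) + 1 / (z₁ + z₂)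
        ≤ (t ^ 2 / x₁ + (1 - t) ^ 2 / x₂) + (t ^ 2 / y₁ + (1 - t) ^ 2 / y₂)
          + (t ^ 2 / z₁ + (1 - t) ^ 2 / z₂) := by linarith
      _ = t ^ 2 * (1 / x₁ + 1 / y₁ + 1 / z₁) + (1 - t) ^ 2 * (1 / x₂ + 1 / y₂ + 1 / z₂) := by
          ring
  have key2 : t ^ 2 * σ₁ + (1 - t) ^ 2 * σ₂ = 1 / (1 / σ₁ + 1 / σ₂) := by
    rw [htdef]; field_simp; ring
  rw [key2] at key
  calc 1 / σ₁ + 1 / σ₂ = 1 / (1 / (1 / σ₁ + 1 / σ₂)) := by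
        rw [one_div_one_div]
    _ ≤ 1 / σ₃ := by
        apply one_div_le_one_div_of_le hσ₃0 key

/-- Superadditivity of `(xy+yz+zx)/(x+y+z)`. -/
private lemma e2e1_superadd (x₁ y₁ z₁ x₂ y₂ z₂ : ℝ)
    (hx₁ : 0 < x₁) (hy₁ : 0 < y₁) (hz₁ : 0 < z₁)
    (hx₂ : 0 < x₂) (hy₂ : 0 < y₂) (hz₂ : 0 < z₂) :
    (x₁ * y₁ + y₁ * z₁ + z₁ * x₁) / (x₁ + y₁ + z₁)
      + (x₂ * y₂ + y₂ * z₂ + z₂ * x₂) / (x₂ + y₂ + z₂)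
      ≤ ((x₁ + x₂) * (y₁ + y₂) + (y₁ + y₂) * (z₁ + z₂) + (z₁ + z₂) * (x₁ + x₂)) /
        ((x₁ + x₂) + (y₁ + y₂) + (z₁ + z₂)) := by
  have hs₁ : (0:ℝ) < x₁ + y₁ + z₁ := by linarith
  have hs₂ : (0:ℝ) < x₂ + y₂ + z₂ := by linarith
  have hx := engel_form x₁ x₂ (x₁ + y₁ + z₁) (x₂ + y₂ + z₂) hs₁ hs₂
  have hy := engel_form y₁ y₂ (x₁ + y₁ + z₁) (x₂ + y₂ + z₂) hs₁ hs₂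
  have hz := engel_form z₁ z₂ (x₁ + y₁ + z₁) (x₂ + y₂ + z₂) hs₁ hs₂
  have e₁ : (x₁ * y₁ + y₁ * z₁ + z₁ * x₁) / (x₁ + y₁ + z₁)
      = ((x₁ + y₁ + z₁) - (x₁ ^ 2 / (x₁ + y₁ + z₁) + y₁ ^ 2 / (x₁ + y₁ + z₁)
        + z₁ ^ 2 / (x₁ + y₁ + z₁))) / 2 := by
    field_simp; ring
  have e₂ : (x₂ * y₂ + y₂ * z₂ + z₂ * x₂) / (x₂ + y₂ + z₂)
      = ((x₂ + y₂ + z₂) - (x₂ ^ 2 / (x₂ + y₂ + z₂) + y₂ ^ 2 / (x₂ + y₂ + z₂)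
        + z₂ ^ 2 / (x₂ + y₂ + z₂))) / 2 := by
    field_simp; ring
  have hs₃ : (0:ℝ) < (x₁ + x₂) + (y₁ + y₂) + (z₁ + z₂) := by linarith
  have e₃ : ((x₁ + x₂) * (y₁ + y₂) + (y₁ + y₂) * (z₁ + z₂) + (z₁ + z₂) * (x₁ + x₂)) /
        ((x₁ + x₂) + (y₁ + y₂) + (z₁ + z₂))
      = (((x₁ + x₂) + (y₁ + y₂) + (z₁ + z₂)) - ((x₁ + x₂) ^ 2 / ((x₁ + x₂) + (y₁ + y₂) + (z₁ + z₂))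
        + (y₁ + y₂) ^ 2 / ((x₁ + x₂) + (y₁ + y₂) + (z₁ + z₂))
        + (z₁ + z₂) ^ 2 / ((x₁ + x₂) + (y₁ + y₂) + (z₁ + z₂)))) / 2 := by
    field_simp; ring
  rw [e₁, e₂, e₃]
  have hxx : (x₁ + x₂) ^ 2 / ((x₁ + x₂) + (y₁ + y₂) + (z₁ + z₂))
      ≤ x₁ ^ 2 / (x₁ + y₁ + z₁) + x₂ ^ 2 / (x₂ + y₂ + z₂) := by
    have : (x₁ + y₁ + z₁) + (x₂ + y₂ + z₂) = (x₁ + x₂) + (y₁ + y₂) + (z₁ + z₂) := by ring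
    rw [← this]; exact hx
  have hyy : (y₁ + y₂) ^ 2 / ((x₁ + x₂) + (y₁ + y₂) + (z₁ + z₂))
      ≤ y₁ ^ 2 / (x₁ + y₁ + z₁) + y₂ ^ 2 / (x₂ + y₂ + z₂) := by
    have : (x₁ + y₁ + z₁) + (x₂ + y₂ + z₂) = (x₁ + x₂) + (y₁ + y₂) + (z₁ + z₂) := by ring
    rw [← this]; exact hy
  have hzz : (z₁ + z₂) ^ 2 / ((x₁ + x₂) + (y₁ + y₂) + (z₁ + z₂))
      ≤ z₁ ^ 2 / (x₁ + y₁ + z₁) + z₂ ^ 2 / (x₂ + y₂ + z₂) := by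
    have : (x₁ + y₁ + z₁) + (x₂ + y₂ + z₂) = (x₁ + x₂) + (y₁ + y₂) + (z₁ + z₂) := by ring
    rw [← this]; exact hz
  linarith

/-- AM–GM for square roots: `√(ab) ≤ (a+b)/2`. -/
private lemma sqrt_mul_le_half_add (a b : ℝ) (ha : 0 ≤ a) (hb : 0 ≤ b) :
    Real.sqrt (a * b) ≤ (a + b) / 2 := by
  have h : a * b ≤ ((a + b) / 2) ^ 2 := by nlinarith [sq_nonneg (a - b)]
  calc Real.sqrt (a * b) ≤ Real.sqrt (((a + b) / 2) ^ 2) := Real.sqrt_le_sqrt h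
    _ = (a + b) / 2 := Real.sqrt_sq (by positivity)

/-- Superadditivity of `√(AB)` from superadditivity of the factors. -/
private lemma sqrt_mul_superadd (a₁ b₁ a₂ b₂ a₃ b₃ : ℝ)
    (ha₁ : 0 ≤ a₁) (hb₁ : 0 ≤ b₁) (ha₂ : 0 ≤ a₂) (hb₂ : 0 ≤ b₂)
    (hA : a₁ + a₂ ≤ a₃) (hB : b₁ + b₂ ≤ b₃) :
    Real.sqrt (a₁ * b₁) + Real.sqrt (a₂ * b₂) ≤ Real.sqrt (a₃ * b₃) := by
  have ha₃ : 0 ≤ a₃ := le_trans (by positivity) hA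
  have hb₃ : 0 ≤ b₃ := le_trans (by positivity) hB
  have step1 : Real.sqrt (a₁ * b₁) + Real.sqrt (a₂ * b₂)
      ≤ Real.sqrt ((a₁ + a₂) * (b₁ + b₂)) := by
    rw [← Real.sqrt_sq (by positivity : (0:ℝ) ≤ Real.sqrt (a₁ * b₁) + Real.sqrt (a₂ * b₂))]
    apply Real.sqrt_le_sqrt
    have h1 : Real.sqrt (a₁ * b₁) ^ 2 = a₁ * b₁ := Real.sq_sqrt (by positivity)
    have h2 : Real.sqrt (a₂ * b₂) ^ 2 = a₂ * b₂ := Real.sq_sqrt (by positivity)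
    have h3 : Real.sqrt (a₁ * b₁) * Real.sqrt (a₂ * b₂) = Real.sqrt (a₁ * b₂ * (a₂ * b₁)) := by
      rw [← Real.sqrt_mul (by positivity)]
      ring_nf
    have h4 : Real.sqrt (a₁ * b₂ * (a₂ * b₁)) ≤ (a₁ * b₂ + a₂ * b₁) / 2 :=
      sqrt_mul_le_half_add _ _ (by positivity) (by positivity)
    nlinarith [Real.sqrt_nonneg (a₁ * b₁), Real.sqrt_nonneg (a₂ * b₂)]
  calc Real.sqrt (a₁ * b₁) + Real.sqrt (a₂ * b₂) ≤ Real.sqrt ((a₁ + a₂) * (b₁ + b₂)) := step1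
    _ ≤ Real.sqrt (a₃ * b₃) := Real.sqrt_le_sqrt (by nlinarith)

/-- Superadditivity of the inradius function `√(xyz/(x+y+z))`. -/
private lemma inradius_superadd (x₁ y₁ z₁ x₂ y₂ z₂ : ℝ)
    (hx₁ : 0 < x₁) (hy₁ : 0 < y₁) (hz₁ : 0 < z₁)
    (hx₂ : 0 < x₂) (hy₂ : 0 < y₂) (hz₂ : 0 < z₂) :
    Real.sqrt (x₁ * y₁ * z₁ / (x₁ + y₁ + z₁)) + Real.sqrt (x₂ * y₂ * z₂ / (x₂ + y₂ + z₂))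
      ≤ Real.sqrt ((x₁ + x₂) * (y₁ + y₂) * (z₁ + z₂) / ((x₁ + x₂) + (y₁ + y₂) + (z₁ + z₂))) := by
  have he₁ : (0:ℝ) < x₁ * y₁ + y₁ * z₁ + z₁ * x₁ := by positivity
  have he₂ : (0:ℝ) < x₂ * y₂ + y₂ * z₂ + z₂ * x₂ := by positivity
  have he₃ : (0:ℝ) < (x₁ + x₂) * (y₁ + y₂) + (y₁ + y₂) * (z₁ + z₂) + (z₁ + z₂) * (x₁ + x₂) := by
    positivity
  have hs₁ : (0:ℝ) < x₁ + y₁ + z₁ := by linarith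
  have hs₂ : (0:ℝ) < x₂ + y₂ + z₂ := by linarith
  have d₁ : x₁ * y₁ * z₁ / (x₁ + y₁ + z₁)
      = (x₁ * y₁ * z₁ / (x₁ * y₁ + y₁ * z₁ + z₁ * x₁))
        * ((x₁ * y₁ + y₁ * z₁ + z₁ * x₁) / (x₁ + y₁ + z₁)) := by
    field_simp
  have d₂ : x₂ * y₂ * z₂ / (x₂ + y₂ + z₂)
      = (x₂ * y₂ * z₂ / (x₂ * y₂ + y₂ * z₂ + z₂ * x₂))
        * ((x₂ * y₂ + y₂ * z₂ + z₂ * x₂) / (x₂ + y₂ + z₂)) := by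
    field_simp
  have d₃ : (x₁ + x₂) * (y₁ + y₂) * (z₁ + z₂) / ((x₁ + x₂) + (y₁ + y₂) + (z₁ + z₂))
      = ((x₁ + x₂) * (y₁ + y₂) * (z₁ + z₂) /
          ((x₁ + x₂) * (y₁ + y₂) + (y₁ + y₂) * (z₁ + z₂) + (z₁ + z₂) * (x₁ + x₂)))
        * (((x₁ + x₂) * (y₁ + y₂) + (y₁ + y₂) * (z₁ + z₂) + (z₁ + z₂) * (x₁ + x₂)) /
          ((x₁ + x₂) + (y₁ + y₂) + (z₁ + z₂))) := by
    field_simp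
  rw [d₁, d₂, d₃]
  apply sqrt_mul_superadd
  · positivity
  · positivity
  · positivity
  · positivity
  · exact harmonic_superadd x₁ y₁ z₁ x₂ y₂ z₂ hx₁ hy₁ hz₁ hx₂ hy₂ hz₂
  · exact e2e1_superadd x₁ y₁ z₁ x₂ y₂ z₂ hx₁ hy₁ hz₁ hx₂ hy₂ hz₂

/-- `arctan` is concave on `[0, ∞)`. -/
private lemma arctan_concaveOn : ConcaveOn ℝ (Set.Ici (0:ℝ)) Real.arctan := by
  apply concaveOn_of_deriv2_nonpos (convex_Ici 0) Real.continuous_arctan.continuousOn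
    Real.differentiable_arctan.differentiableOn
  · rw [Real.deriv_arctan]
    intro x _
    apply DifferentiableAt.differentiableWithinAt
    have : (1:ℝ) + x ^ 2 ≠ 0 := by positivity
    fun_prop (disch := positivity)
  · intro x hx
    rw [interior_Ici] at hx
    have hx0 : 0 < x := hx
    have hD : deriv (deriv Real.arctan) x = -(2 * x) / (1 + x ^ 2) ^ 2 := by
      rw [Real.deriv_arctan]
      have h1 : HasDerivAt (fun y : ℝ => 1 + y ^ 2) (2 * x) x := by
        simpa using ((hasDerivAt_pow 2 x).const_add 1)
      have h2 : HasDerivAt (fun y : ℝ => (1 + y ^ 2)⁻¹) (-(2 * x) / (1 + x ^ 2) ^ 2) x := by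
        have := h1.inv (by positivity : (1:ℝ) + x ^ 2 ≠ 0)
        exact this
      have h3 : HasDerivAt (fun y : ℝ => 1 / (1 + y ^ 2)) (-(2 * x) / (1 + x ^ 2) ^ 2) x := by
        simpa [one_div] using h2
      exact h3.deriv
    have : deriv^[2] Real.arctan x = deriv (deriv Real.arctan) x := by
      simp [Function.iterate_succ, Function.iterate_one]
    rw [this, hD]
    have : (0:ℝ) < (1 + x ^ 2) ^ 2 := by positivity
    apply div_nonpos_of_nonpos_of_nonneg <;> nlinarith

/-- Weighted (perspective) form of arctan concavity. -/
private lemma arctan_perspective (z₁ z₂ u₁ u₂ : ℝ) (hz₁ : 0 < z₁) (hz₂ : 0 < z₂)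
    (hu₁ : 0 ≤ u₁) (hu₂ : 0 ≤ u₂) :
    z₁ * Real.arctan u₁ + z₂ * Real.arctan u₂
      ≤ (z₁ + z₂) * Real.arctan ((z₁ * u₁ + z₂ * u₂) / (z₁ + z₂)) := by
  have hz₃ : 0 < z₁ + z₂ := by linarith
  have ha : (0:ℝ) ≤ z₁ / (z₁ + z₂) := by positivity
  have hb : (0:ℝ) ≤ z₂ / (z₁ + z₂) := by positivity
  have hab : z₁ / (z₁ + z₂) + z₂ / (z₁ + z₂) = 1 := by field_simp
  have h := arctan_concaveOn.2 (Set.mem_Ici.mpr hu₁) (Set.mem_Ici.mpr hu₂) ha hb hab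
  simp only [smul_eq_mul] at h
  have harg : z₁ / (z₁ + z₂) * u₁ + z₂ / (z₁ + z₂) * u₂ = (z₁ * u₁ + z₂ * u₂) / (z₁ + z₂) := by
    field_simp
  rw [harg] at h
  have := mul_le_mul_of_nonneg_left h (le_of_lt hz₃)
  calc z₁ * Real.arctan u₁ + z₂ * Real.arctan u₂
      = (z₁ + z₂) * (z₁ / (z₁ + z₂) * Real.arctan u₁ + z₂ / (z₁ + z₂) * Real.arctan u₂) := by
        field_simp
    _ ≤ (z₁ + z₂) * Real.arctan ((z₁ * u₁ + z₂ * u₂) / (z₁ + z₂)) := this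

/-- Law-of-cosines angle in tangent-length coordinates, as an arctangent. -/
private lemma arccos_eq_two_arctan (x y z : ℝ) (hx : 0 < x) (hy : 0 < y) (hz : 0 < z) :
    Real.arccos ((z * (x + y + z) - x * y) / (z * (x + y + z) + x * y))
      = 2 * Real.arctan (Real.sqrt (x * y / (z * (x + y + z)))) := by
  set t := Real.sqrt (x * y / (z * (x + y + z))) with htdef
  have ht : 0 ≤ t := Real.sqrt_nonneg _
  have ht2 : t ^ 2 = x * y / (z * (x + y + z)) := Real.sq_sqrt (by positivity)
  have hcos : Real.cos (2 * Real.arctan t)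
      = (z * (x + y + z) - x * y) / (z * (x + y + z) + x * y) := by
    rw [Real.cos_two_mul, Real.cos_sq_arctan, ht2]
    have h1 : (0:ℝ) < z * (x + y + z) := by positivity
    have h2 : (0:ℝ) < z * (x + y + z) + x * y := by positivity
    field_simp
    ring
  rw [← hcos, Real.arccos_cos]
  · have : 0 ≤ Real.arctan t := by
      have := Real.arctan_strictMono.monotone ht
      simpa [Real.arctan_zero] using this
    linarith
  · have := Real.arctan_lt_pi_div_two t
    linarith [Real.pi_pos]

theorem triangle_angle_inequality
    (X Y Z U V W : ℝ) (hX : 0 < X) (hY : 0 < Y) (hZ : 0 < Z)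
    (hU : 0 < U) (hV : 0 < V) (hW : 0 < W)
    (h1 : |X - Y| < Z) (h2 : Z < X + Y)
    (h3 : |U - V| < W) (h4 : W < U + V) :
    (|(X + U) - (Y + V)| < Z + W ∧ Z + W < (X + U) + (Y + V)) ∧
    Real.arccos ((X ^ 2 + Y ^ 2 - Z ^ 2) / (2 * X * Y)) * (X + Y - Z) +
      Real.arccos ((U ^ 2 + V ^ 2 - W ^ 2) / (2 * U * V)) * (U + V - W) ≤
    Real.arccos (((X + U) ^ 2 + (Y + V) ^ 2 - (Z + W) ^ 2) /
      (2 * (X + U) * (Y + V))) * ((X + U) + (Y + V) - (Z + W)) := by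
  rw [abs_lt] at h1 h3
  obtain ⟨h1l, h1r⟩ := h1
  obtain ⟨h3l, h3r⟩ := h3
  constructor
  · constructor
    · rw [abs_lt]; constructor <;> linarith
    · linarith
  -- tangent-length coordinates
  set x₁ : ℝ := (Y + Z - X) / 2 with hx₁def
  set y₁ : ℝ := (X + Z - Y) / 2 with hy₁def
  set z₁ : ℝ := (X + Y - Z) / 2 with hz₁def
  set x₂ : ℝ := (V + W - U) / 2 with hx₂def
  set y₂ : ℝ := (U + W - V) / 2 with hy₂def
  set z₂ : ℝ := (U + V - W) / 2 with hz₂def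
  have hx₁ : 0 < x₁ := by rw [hx₁def]; linarith
  have hy₁ : 0 < y₁ := by rw [hy₁def]; linarith
  have hz₁ : 0 < z₁ := by rw [hz₁def]; linarith
  have hx₂ : 0 < x₂ := by rw [hx₂def]; linarith
  have hy₂ : 0 < y₂ := by rw [hy₂def]; linarith
  have hz₂ : 0 < z₂ := by rw [hz₂def]; linarith
  -- rewrite the three arccos arguments
  have harg₁ : (X ^ 2 + Y ^ 2 - Z ^ 2) / (2 * X * Y)
      = (z₁ * (x₁ + y₁ + z₁) - x₁ * y₁) / (z₁ * (x₁ + y₁ + z₁) + x₁ * y₁) := by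
    rw [div_eq_div_iff (by positivity) (by positivity)]
    rw [hx₁def, hy₁def, hz₁def]; ring
  have harg₂ : (U ^ 2 + V ^ 2 - W ^ 2) / (2 * U * V)
      = (z₂ * (x₂ + y₂ + z₂) - x₂ * y₂) / (z₂ * (x₂ + y₂ + z₂) + x₂ * y₂) := by
    rw [div_eq_div_iff (by positivity) (by positivity)]
    rw [hx₂def, hy₂def, hz₂def]; ring
  have hx₃ : 0 < x₁ + x₂ := by linarith
  have hy₃ : 0 < y₁ + y₂ := by linarith
  have hz₃ : 0 < z₁ + z₂ := by linarith
  have harg₃ : ((X + U) ^ 2 + (Y + V) ^ 2 - (Z + W) ^ 2) / (2 * (X + U) * (Y + V))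
      = ((z₁ + z₂) * ((x₁ + x₂) + (y₁ + y₂) + (z₁ + z₂)) - (x₁ + x₂) * (y₁ + y₂)) /
        ((z₁ + z₂) * ((x₁ + x₂) + (y₁ + y₂) + (z₁ + z₂)) + (x₁ + x₂) * (y₁ + y₂)) := by
    rw [div_eq_div_iff (by positivity) (by positivity)]
    rw [hx₁def, hy₁def, hz₁def, hx₂def, hy₂def, hz₂def]; ring
  rw [harg₁, harg₂, harg₃,
    arccos_eq_two_arctan x₁ y₁ z₁ hx₁ hy₁ hz₁,
    arccos_eq_two_arctan x₂ y₂ z₂ hx₂ hy₂ hz₂,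
    arccos_eq_two_arctan (x₁ + x₂) (y₁ + y₂) (z₁ + z₂) hx₃ hy₃ hz₃]
  set t₁ := Real.sqrt (x₁ * y₁ / (z₁ * (x₁ + y₁ + z₁))) with ht₁def
  set t₂ := Real.sqrt (x₂ * y₂ / (z₂ * (x₂ + y₂ + z₂))) with ht₂def
  set t₃ := Real.sqrt ((x₁ + x₂) * (y₁ + y₂) /
    ((z₁ + z₂) * ((x₁ + x₂) + (y₁ + y₂) + (z₁ + z₂)))) with ht₃def
  have ht₁ : 0 ≤ t₁ := Real.sqrt_nonneg _
  have ht₂ : 0 ≤ t₂ := Real.sqrt_nonneg _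
  have ht₃ : 0 ≤ t₃ := Real.sqrt_nonneg _
  -- z·t = √(xyz/s)
  have hzt : ∀ x y z : ℝ, 0 < x → 0 < y → 0 < z →
      z * Real.sqrt (x * y / (z * (x + y + z))) = Real.sqrt (x * y * z / (x + y + z)) := by
    intro x y z hx hy hz
    rw [← Real.sqrt_sq hz.le, ← Real.sqrt_mul (by positivity)]
    congr 1
    simp only [Real.sqrt_sq hz.le]
    field_simp
  have hr₁ : z₁ * t₁ = Real.sqrt (x₁ * y₁ * z₁ / (x₁ + y₁ + z₁)) := by
    rw [ht₁def]; exact hzt x₁ y₁ z₁ hx₁ hy₁ hz₁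
  have hr₂ : z₂ * t₂ = Real.sqrt (x₂ * y₂ * z₂ / (x₂ + y₂ + z₂)) := by
    rw [ht₂def]; exact hzt x₂ y₂ z₂ hx₂ hy₂ hz₂
  have hr₃ : (z₁ + z₂) * t₃
      = Real.sqrt ((x₁ + x₂) * (y₁ + y₂) * (z₁ + z₂) / ((x₁ + x₂) + (y₁ + y₂) + (z₁ + z₂))) := by
    rw [ht₃def]; exact hzt (x₁ + x₂) (y₁ + y₂) (z₁ + z₂) hx₃ hy₃ hz₃
  -- superadditivity of the inradius
  have hsuper : z₁ * t₁ + z₂ * t₂ ≤ (z₁ + z₂) * t₃ := by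
    rw [hr₁, hr₂, hr₃]
    exact inradius_superadd x₁ y₁ z₁ x₂ y₂ z₂ hx₁ hy₁ hz₁ hx₂ hy₂ hz₂
  -- perspective concavity of arctan
  have hmain : z₁ * Real.arctan t₁ + z₂ * Real.arctan t₂ ≤ (z₁ + z₂) * Real.arctan t₃ := by
    calc z₁ * Real.arctan t₁ + z₂ * Real.arctan t₂
        ≤ (z₁ + z₂) * Real.arctan ((z₁ * t₁ + z₂ * t₂) / (z₁ + z₂)) :=
          arctan_perspective z₁ z₂ t₁ t₂ hz₁ hz₂ ht₁ ht₂
      _ ≤ (z₁ + z₂) * Real.arctan t₃ := by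
          apply mul_le_mul_of_nonneg_left _ (by linarith)
          apply Real.arctan_strictMono.monotone
          rw [div_le_iff₀ (by linarith)]
          linarith [hsuper]
  have hXYZ : X + Y - Z = 2 * z₁ := by rw [hz₁def]; ring
  have hUVW : U + V - W = 2 * z₂ := by rw [hz₂def]; ring
  have hSum : (X + U) + (Y + V) - (Z + W) = 2 * (z₁ + z₂) := by
    rw [hz₁def, hz₂def]; ring
  rw [hXYZ, hUVW, hSum]
  linarith [hmain]
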